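/- Let a > 0, τ ≠ 0 and define f(x) = C Σ_{n=0}^∞ (1/n!) (b/(aτ))^n (e^{-aτ²/2})^{n²} x^n. Then f satisfies f'(x) = β f(α x) for all x ∈ ℝ, where α = e^{-aτ²} and β = (b/(aτ)) e^{-aτ²/2}. -/

import Mathlib

theorem stmt_4 (a b τ C α β : ℝ) (ha : 0 < a) (hτ : τ ≠ 0)
    (hα : α = Real.exp (-a * τ ^ 2)) (hβ : β = b / (a * τ) * Real.exp (-a * τ ^ 2 / 2))
    (f : ℝ → ℝ)
    (hf : ∀ x : ℝ, f x =
      C * ∑' n : ℕ, (1 / (n.factorial : ℝ)) * (b / (a * τ)) ^ n *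
        (Real.exp (-a * τ ^ 2 / 2)) ^ (n ^ 2) * x ^ n) :
    ∀ x : ℝ, deriv f x = β * f (α * x) := by
  intro x
  set q : ℝ := Real.exp (-a * τ ^ 2 / 2) with hq
  set k : ℝ := b / (a * τ) with hk
  set c : ℕ → ℝ := fun n => C * ((1 / (n.factorial : ℝ)) * k ^ n * q ^ (n ^ 2)) with hc
  have hq0 : 0 < q := Real.exp_pos _
  have hq1 : q ≤ 1 := by
    rw [hq, Real.exp_le_one_iff]
    have : 0 ≤ a * τ ^ 2 := by positivity
    linarith
  -- rewrite f
  have hfc : ∀ y : ℝ, f y = ∑' n : ℕ, c n * y ^ n := by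
    intro y
    rw [hf y, ← tsum_mul_left]
    congr 1; ext n; rw [hc]; ring
  -- coefficient bound
  have hcb : ∀ n : ℕ, |c n| ≤ |C| * |k| ^ n / n.factorial := by
    intro n
    rw [hc]
    have h1 : |C * ((1 / (n.factorial : ℝ)) * k ^ n * q ^ (n ^ 2))|
        = |C| * (1 / (n.factorial : ℝ)) * |k| ^ n * q ^ (n ^ 2) := by
      rw [abs_mul, abs_mul, abs_mul, abs_pow, abs_pow, abs_of_pos hq0,
        abs_of_pos (by positivity : (0:ℝ) < 1 / (n.factorial : ℝ))]
      ring
    rw [h1]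
    have h2 : q ^ (n ^ 2) ≤ 1 := pow_le_one₀ hq0.le hq1
    have h3 : (0:ℝ) ≤ |C| * (1 / (n.factorial : ℝ)) * |k| ^ n := by positivity
    calc |C| * (1 / (n.factorial : ℝ)) * |k| ^ n * q ^ (n ^ 2)
        ≤ |C| * (1 / (n.factorial : ℝ)) * |k| ^ n * 1 := by
          exact mul_le_mul_of_nonneg_left h2 h3
      _ = |C| * |k| ^ n / n.factorial := by ring
  set R : ℝ := |x| + 1 with hR
  have hR1 : (1:ℝ) ≤ R := by have := abs_nonneg x; rw [hR]; linarith
  have hR0 : 0 < R := lt_of_lt_of_le one_pos hR1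
  set u : ℕ → ℝ := fun n => |C| * (2 * (|k| * R + 1)) ^ n / n.factorial with hu
  have hu_sum : Summable u := by
    have := (Real.summable_pow_div_factorial (2 * (|k| * R + 1))).mul_left |C|
    exact this.congr (fun n => by rw [hu]; ring)
  -- bound on derivatives on ball 0 R
  have hbound : ∀ (n : ℕ) (y : ℝ), y ∈ Metric.ball (0:ℝ) R →
      ‖c n * (n * y ^ (n - 1))‖ ≤ u n := by
    intro n y hy
    have hyR : |y| ≤ R := by
      have := Metric.mem_ball.1 hy
      rw [Real.dist_eq, sub_zero] at this
      linarith
    have hn2 : (n : ℝ) ≤ 2 ^ n := by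
      exact_mod_cast Nat.le_of_lt_succ (Nat.lt_succ_of_le (Nat.lt_two_pow_self (n := n)).le)
    have h1 : ‖c n * (n * y ^ (n - 1))‖ = |c n| * (n * |y| ^ (n - 1)) := by
      rw [Real.norm_eq_abs, abs_mul]
      congr 1
      rw [abs_mul, abs_pow, Nat.abs_cast]
    rw [h1]
    have h2 : |y| ^ (n - 1) ≤ R ^ n := by
      calc |y| ^ (n - 1) ≤ R ^ (n - 1) :=
            pow_le_pow_left₀ (abs_nonneg y) hyR _
        _ ≤ R ^ n := pow_le_pow_right₀ hR1 (Nat.sub_le n 1)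
    calc |c n| * (n * |y| ^ (n - 1))
        ≤ (|C| * |k| ^ n / n.factorial) * (2 ^ n * R ^ n) := by
          apply mul_le_mul (hcb n) ?_ (by positivity) (by positivity)
          exact mul_le_mul hn2 h2 (by positivity) (by positivity)
      _ ≤ u n := by
          rw [hu]
          rw [div_mul_eq_mul_div, div_le_div_iff₀ (by positivity) (by positivity)]
          have : |C| * |k| ^ n * (2 ^ n * R ^ n) ≤ |C| * (2 * (|k| * R + 1)) ^ n := by
            have hkey : |k| ^ n * (2 ^ n * R ^ n) ≤ (2 * (|k| * R + 1)) ^ n := by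
              rw [show |k| ^ n * (2 ^ n * R ^ n) = (2 * (|k| * R)) ^ n by
                rw [mul_pow, mul_pow]; ring]
              apply pow_le_pow_left₀ (by positivity)
              nlinarith [abs_nonneg k]
            nlinarith [abs_nonneg C, pow_nonneg (abs_nonneg k) n,
              pow_nonneg (by norm_num : (0:ℝ) ≤ 2) n, pow_nonneg hR0.le n,
              pow_nonneg (by positivity : (0:ℝ) ≤ 2 * (|k| * R + 1)) n]
          nlinarith [(show (0:ℝ) < n.factorial by exact_mod_cast n.factorial_pos)]
  -- summability at x
  have hsum_x : Summable fun n => c n * x ^ n := by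
    apply Summable.of_norm_bounded hu_sum
    intro n
    have hx : |x| ≤ R := by rw [hR]; linarith
    rw [Real.norm_eq_abs, abs_mul, abs_pow]
    calc |c n| * |x| ^ n ≤ (|C| * |k| ^ n / n.factorial) * R ^ n := by
          apply mul_le_mul (hcb n) (pow_le_pow_left₀ (abs_nonneg x) hx n)
            (by positivity) (by positivity)
      _ ≤ u n := by
          rw [hu, div_mul_eq_mul_div, div_le_div_iff₀ (by positivity) (by positivity)]
          have : |k| ^ n * R ^ n ≤ (2 * (|k| * R + 1)) ^ n := by
            rw [← mul_pow]
            apply pow_le_pow_left₀ (by positivity)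
            nlinarith [abs_nonneg k]
          nlinarith [mul_le_mul_of_nonneg_right this
            (by positivity : (0:ℝ) ≤ |C| * (n.factorial : ℝ))]
  -- term-by-term differentiation
  have hderiv : HasDerivAt f (∑' n : ℕ, c n * (n * x ^ (n - 1))) x := by
    have := hasDerivAt_tsum_of_isPreconnected hu_sum Metric.isOpen_ball
      (convex_ball (0:ℝ) R).isPreconnected
      (g := fun n y => c n * y ^ n) (g' := fun n y => c n * (n * y ^ (n - 1)))
      (fun n y _ => (hasDerivAt_pow n y).const_mul (c n))
      hbound (Metric.mem_ball.2 (by rw [Real.dist_eq, sub_zero, hR]; linarith [abs_nonneg x]))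
      hsum_x
      (Metric.mem_ball.2 (by rw [Real.dist_eq, sub_zero, hR]; linarith [abs_nonneg x]))
    have heq : f = fun z => ∑' n : ℕ, c n * z ^ n := funext hfc
    rw [heq]
    exact this
  rw [hderiv.deriv]
  -- summability of derivative series
  have hsum_d : Summable fun n : ℕ => c n * (n * x ^ (n - 1)) := by
    apply Summable.of_norm_bounded hu_sum
    intro n
    exact hbound n x (Metric.mem_ball.2 (by rw [Real.dist_eq, sub_zero, hR]; linarith [abs_nonneg x]))
  -- reindex
  rw [hsum_d.tsum_eq_zero_add]
  simp only [Nat.cast_zero, zero_mul, mul_zero, zero_add]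
  have hterm : ∀ n : ℕ, c (n + 1) * ((n + 1 : ℕ) * x ^ (n + 1 - 1))
      = β * (c n * (α * x) ^ n) := by
    intro n
    have hfac : ((n + 1).factorial : ℝ) = (n + 1) * n.factorial := by
      rw [Nat.factorial_succ]; push_cast; ring
    have hα2 : α = q ^ 2 := by
      rw [hα, hq, ← Real.exp_nat_mul]; norm_num; ring_nf
    have hqpow : q ^ ((n + 1) ^ 2) = q * q ^ (n ^ 2) * (q ^ 2) ^ n := by
      rw [show (n+1)^2 = 1 + n^2 + 2*n from by ring, pow_add, pow_add, pow_one, pow_mul]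
    have hn1 : ((n:ℝ) + 1) ≠ 0 := by positivity
    rw [hβ, hα2, hc]
    simp only [Nat.add_sub_cancel, Nat.cast_add, Nat.cast_one]
    rw [hfac, hqpow, mul_pow]
    field_simp
    ring
  calc (∑' n : ℕ, c (n + 1) * ((n + 1 : ℕ) * x ^ (n + 1 - 1)))
      = ∑' n : ℕ, β * (c n * (α * x) ^ n) := by
        congr 1; ext n; exact hterm n
    _ = β * ∑' n : ℕ, c n * (α * x) ^ n := tsum_mul_left
    _ = β * f (α * x) := by rw [hfc]
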